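/- The root x₀ of the ML equation f(x) = 0, with f(x) = A·2^K·x - ∑_{j=0}^{K-L} b_{K-j}·2^j·x/((1+x)^{2^j}-1), satisfies x₀ ≤ S/(A·2^K), where S := ∑_{i=L}^{K} b_i. -/

import Mathlib

theorem ml_root_upper_bound (A : ℝ) (hA : 0 < A) (L K : ℤ) (hLK : L ≤ K)
    (b : ℤ → ℝ) (hb : ∀ i, 0 ≤ b i)
    (hne : ∃ i ∈ Finset.Icc L K, b i ≠ 0)
    (x₀ : ℝ) (hx₀ : 0 < x₀)
    (hroot : A * (2 : ℝ) ^ K * x₀ -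
        ∑ j ∈ Finset.range ((K - L).toNat + 1),
          b (K - (j : ℤ)) * 2 ^ j * x₀ / ((1 + x₀) ^ (2 ^ j) - 1) = 0) :
    x₀ ≤ (∑ i ∈ Finset.Icc L K, b i) / (A * (2 : ℝ) ^ K) := by
  have hA2 : 0 < A * (2 : ℝ) ^ K := by positivity
  rw [le_div_iff₀ hA2]
  have hsum : ∑ i ∈ Finset.Icc L K, b i
      = ∑ j ∈ Finset.range ((K - L).toNat + 1), b (K - (j : ℤ)) := by
    refine Finset.sum_bij' (fun i _ => (K - i).toNat) (fun j _ => K - (j : ℤ))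
      ?_ ?_ ?_ ?_ ?_
    · intro a ha
      simp only [Finset.mem_Icc] at ha
      simp only [Finset.mem_range]
      omega
    · intro a ha
      simp only [Finset.mem_range] at ha
      simp only [Finset.mem_Icc]
      omega
    · intro a ha
      simp only [Finset.mem_Icc] at ha
      omega
    · intro a ha
      simp only [Finset.mem_range] at ha
      omega
    · intro a ha
      simp only [Finset.mem_Icc] at ha
      congr 1
      omega
  rw [hsum]
  have hkey : A * (2 : ℝ) ^ K * x₀
      ≤ ∑ j ∈ Finset.range ((K - L).toNat + 1), b (K - (j : ℤ)) := by
    rw [sub_eq_zero] at hroot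
    rw [hroot]
    refine Finset.sum_le_sum ?_
    intro j _
    have hbern : 1 + ((2 : ℕ) ^ j : ℝ) * x₀ ≤ (1 + x₀) ^ (2 ^ j) := by
      have := one_add_mul_le_pow (a := x₀) (by linarith) (2 ^ j)
      simpa using this
    have h2j : (0 : ℝ) < (2 : ℝ) ^ j * x₀ := by positivity
    have hD : (2 : ℝ) ^ j * x₀ ≤ (1 + x₀) ^ (2 ^ j) - 1 := by
      push_cast at hbern; linarith
    have hDpos : (0 : ℝ) < (1 + x₀) ^ (2 ^ j) - 1 := lt_of_lt_of_le h2j hD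
    rw [div_le_iff₀ hDpos]
    calc b (K - (j : ℤ)) * 2 ^ j * x₀ = b (K - (j : ℤ)) * ((2:ℝ) ^ j * x₀) := by ring
      _ ≤ b (K - (j : ℤ)) * ((1 + x₀) ^ (2 ^ j) - 1) :=
          mul_le_mul_of_nonneg_left hD (hb _)
  linarith [hkey]
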